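/- arXiv:0911.3773 — 5 statements merged into one kernel-verified Lean document; each statement's English description precedes it below -/
import Mathlib

section
/- (Multiplication formula) For every positive integer m and real θ, Cl₂(mθ) = m · Σ_{ℓ=0}^{m-1} Cl₂(θ + 2πℓ/m). -/
open Real

noncomputable def Cl2 (θ : ℝ) : ℝ := ∑' m : ℕ, Real.sin ((m + 1) * θ) / (m + 1) ^ 2

lemma summable_cl2 (α : ℝ) :
    Summable (fun k : ℕ => Real.sin ((k + 1) * α) / (k + 1) ^ 2) := by
  have h0 : Summable (fun n : ℕ => 1 / (n : ℝ) ^ 2) :=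
    summable_one_div_nat_pow.mpr one_lt_two
  have h : Summable (fun k : ℕ => 1 / ((k : ℝ) + 1) ^ 2) :=
    ((summable_nat_add_iff 1).mpr h0).congr fun k => by push_cast; ring
  refine Summable.of_abs (h.of_nonneg_of_le (fun k => abs_nonneg _) fun k => ?_)
  have hk : (0:ℝ) < ((k:ℝ) + 1) ^ 2 := by positivity
  rw [abs_div, abs_of_pos hk]
  gcongr
  exact abs_le.mpr ⟨Real.neg_one_le_sin _, Real.sin_le_one _⟩

lemma sum_sin_mul (m n : ℕ) (hm : 0 < m) (θ : ℝ) :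
    ∑ ℓ ∈ Finset.range m, Real.sin ((n : ℝ) * (θ + 2 * π * ℓ / m)) =
      if m ∣ n then (m : ℝ) * Real.sin (n * θ) else 0 := by
  have hm' : (m : ℝ) ≠ 0 := Nat.cast_ne_zero.mpr hm.ne'
  have hmC : (m : ℂ) ≠ 0 := Nat.cast_ne_zero.mpr hm.ne'
  set ζ : ℂ := Complex.exp ((2 * π * n / m : ℝ) * Complex.I) with hζdef
  have key : ∀ ℓ ∈ Finset.range m, Real.sin ((n : ℝ) * (θ + 2 * π * ℓ / m)) =
      (Complex.exp (((n : ℝ) * θ : ℝ) * Complex.I) * ζ ^ ℓ).im := by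
    intro ℓ _
    rw [hζdef, ← Complex.exp_nat_mul, ← Complex.exp_add]
    have h1 : ((n : ℝ) * θ : ℝ) * Complex.I + (ℓ : ℂ) * (((2 * π * n / m : ℝ)) * Complex.I)
        = (((n : ℝ) * (θ + 2 * π * ℓ / m) : ℝ)) * Complex.I := by
      push_cast
      field_simp [hmC]
    rw [h1, Complex.exp_ofReal_mul_I_im]
  rw [Finset.sum_congr rfl key, ← Complex.im_sum, ← Finset.mul_sum]
  by_cases hdvd : m ∣ n
  · obtain ⟨c, rfl⟩ := hdvd
    have hζ : ζ = 1 := by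
      rw [hζdef]
      have h2 : ((2 * π * (m * c : ℕ) / m : ℝ) : ℂ) * Complex.I
          = ((c : ℤ) : ℂ) * (2 * π * Complex.I) := by
        push_cast
        field_simp [hmC]
      rw [h2, Complex.exp_int_mul_two_pi_mul_I]
    rw [hζ, if_pos ⟨c, rfl⟩]
    simp only [one_pow, Finset.sum_const, Finset.card_range, nsmul_eq_mul, mul_one,
      Complex.mul_im, Complex.exp_ofReal_mul_I_im, Complex.exp_ofReal_mul_I_re,
      Complex.natCast_re, Complex.natCast_im, mul_zero, add_zero]
    push_cast
    ring_nf
  · have hζm : ζ ^ m = 1 := by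
      rw [hζdef, ← Complex.exp_nat_mul]
      have h3 : (m : ℂ) * (((2 * π * n / m : ℝ)) * Complex.I)
          = ((n : ℤ) : ℂ) * (2 * π * Complex.I) := by
        push_cast
        field_simp [hmC]
      rw [h3, Complex.exp_int_mul_two_pi_mul_I]
    have hζ1 : ζ ≠ 1 := by
      intro h
      rw [hζdef, Complex.exp_eq_one_iff] at h
      obtain ⟨k, hk⟩ := h
      have hI : ((2 * π * n / m : ℝ) : ℂ) = (k : ℂ) * (2 * π) :=
        mul_right_cancel₀ Complex.I_ne_zero (by linear_combination hk)
      have hre : (2 * π * n / m : ℝ) = (k : ℝ) * (2 * π) := by exact_mod_cast hI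
      have hn : (n : ℝ) = (k : ℝ) * m := by
        have hpi : (π : ℝ) ≠ 0 := Real.pi_ne_zero
        field_simp at hre
        exact mul_left_cancel₀ (mul_ne_zero two_ne_zero hpi)
          (by linear_combination (2 * π) * hre)
      have hnz : (n : ℤ) = m * k := by exact_mod_cast hn.trans (mul_comm _ _)
      exact hdvd (Int.natCast_dvd_natCast.mp ⟨k, hnz⟩)
    rw [if_neg hdvd, geom_sum_eq hζ1, hζm]
    simp

theorem stmt5 (m : ℕ) (hm : 0 < m) (θ : ℝ) :
    Cl2 (m * θ) = m * ∑ ℓ ∈ Finset.range m, Cl2 (θ + 2 * π * ℓ / m) := by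
  have hm' : (m : ℝ) ≠ 0 := Nat.cast_ne_zero.mpr hm.ne'
  unfold Cl2
  rw [← Summable.tsum_finsetSum (f := fun (ℓ : ℕ) (k : ℕ) =>
      Real.sin (((k : ℝ) + 1) * (θ + 2 * π * ℓ / m)) / ((k : ℝ) + 1) ^ 2)
      (s := Finset.range m) (fun ℓ _ => summable_cl2 (θ + 2 * π * ℓ / m)),
    ← tsum_mul_left]
  set f : ℕ → ℝ := fun k =>
    (m : ℝ) * ((if m ∣ (k + 1) then (m : ℝ) * Real.sin ((k + 1 : ℝ) * θ) else 0)
      / ((k : ℝ) + 1) ^ 2) with hf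
  have hRHS : ∀ k : ℕ,
      (m : ℝ) * ∑ ℓ ∈ Finset.range m, Real.sin (((k : ℝ) + 1) * (θ + 2 * π * ℓ / m))
        / ((k : ℝ) + 1) ^ 2 = f k := by
    intro k
    rw [hf, ← Finset.sum_div]
    congr 1
    have := sum_sin_mul m (k + 1) hm θ
    push_cast at this
    rw [this]
  rw [show (∑' k : ℕ, (m:ℝ) * ∑ ℓ ∈ Finset.range m,
      Real.sin (((k:ℝ) + 1) * (θ + 2 * π * ℓ / m)) / ((k:ℝ) + 1) ^ 2) = ∑' k, f k from
    tsum_congr hRHS]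
  -- now evaluate LHS as tsum over the injection j ↦ m * j + (m - 1)
  have hinj : Function.Injective (fun j : ℕ => m * j + (m - 1)) := by
    intro a b hab
    simp only at hab
    exact Nat.eq_of_mul_eq_mul_left hm (Nat.add_right_cancel hab)
  have hsupp : Function.support f ⊆ Set.range (fun j : ℕ => m * j + (m - 1)) := by
    intro k hk
    by_cases hdvd : m ∣ (k + 1)
    · obtain ⟨c, hc⟩ := hdvd
      rcases c with _ | c
      · omega
      · rw [Nat.mul_succ] at hc
        exact ⟨c, by simp only; omega⟩
    · exfalso
      apply hk
      rw [hf]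
      simp [hdvd]
  rw [← hinj.tsum_eq hsupp]
  apply tsum_congr
  intro j
  have hkey : (m * j + (m - 1) : ℕ) + 1 = m * (j + 1) := by rw [Nat.mul_succ]; omega
  have hc : ((m * j + (m - 1) : ℕ) : ℝ) + 1 = (m : ℝ) * ((j : ℝ) + 1) := by
    exact_mod_cast congrArg (Nat.cast : ℕ → ℝ) hkey
  show Real.sin (((j : ℝ) + 1) * ((m : ℝ) * θ)) / ((j : ℝ) + 1) ^ 2 = f (m * j + (m - 1))
  rw [hf]
  dsimp only
  rw [hkey, if_pos (dvd_mul_right m (j + 1)), hc,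
    show ((j : ℝ) + 1) * ((m : ℝ) * θ) = ((m : ℝ) * ((j : ℝ) + 1)) * θ by ring]
  have hj : ((j : ℝ) + 1) ≠ 0 := by positivity
  field_simp
end

section
/- (Duplication formula) For all real θ, (1/2)·Cl₂(2θ) = Cl₂(θ) - Cl₂(π - θ). -/
open Real

lemma summ (θ : ℝ) : Summable (fun m : ℕ => Real.sin ((m + 1) * θ) / (m + 1) ^ 2) := by
  have h2 : Summable (fun m : ℕ => 1/((m:ℝ)+1)^2) := by
    have := Real.summable_one_div_nat_pow.mpr (le_refl 2)
    exact ((summable_nat_add_iff 1).mpr this).congr (by intro n; push_cast; ring_nf)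
  apply Summable.of_abs
  apply h2.of_nonneg_of_le (fun m => abs_nonneg _)
  intro m
  rw [abs_div, abs_of_nonneg (by positivity : (0:ℝ) ≤ ((m:ℝ)+1)^2)]
  gcongr
  exact Real.abs_sin_le_one _

lemma sin_shift (n : ℕ) (θ : ℝ) : Real.sin ((n+1) * (π - θ)) = -((-1)^(n+1) * Real.sin ((n+1)*θ)) := by
  have : ((n:ℝ)+1) * (π - θ) = ((n+1 : ℕ) : ℝ) * π - (n+1)*θ := by push_cast; ring
  rw [this, Real.sin_nat_mul_pi_sub]

theorem stmt6 (θ : ℝ) : (1 / 2) * Cl2 (2 * θ) = Cl2 θ - Cl2 (π - θ) := by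
  unfold Cl2
  rw [← Summable.tsum_sub (summ θ) (summ (π - θ)), ← tsum_mul_left]
  set h : ℕ → ℝ := fun m => Real.sin ((m + 1) * θ) / (m + 1) ^ 2 -
      Real.sin ((m + 1) * (π - θ)) / (m + 1) ^ 2 with hh
  have key : ∀ k : ℕ, (1/2) * (Real.sin ((k + 1) * (2*θ)) / (k + 1) ^ 2) = h (2*k+1) := by
    intro k
    simp only [hh, sin_shift]
    have e1 : ((2*k+1 : ℕ) : ℝ) + 1 = 2*((k:ℝ)+1) := by push_cast; ring
    have e2 : (-1:ℝ)^(2*k+1+1) = 1 := by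
      rw [pow_succ, pow_succ]; simp [pow_mul]
    rw [e1, e2]
    have e3 : 2*((k:ℝ)+1) * θ = ((k:ℝ)+1) * (2*θ) := by ring
    rw [e3]
    have hc : ((k:ℝ)+1) ≠ 0 := by positivity
    field_simp
    ring
  rw [tsum_congr key]
  have hinj : Function.Injective (fun k : ℕ => 2*k+1) := fun a b hab => by
    simpa using hab
  have hsupp : Function.support h ⊆ Set.range (fun k : ℕ => 2*k+1) := by
    intro x hx
    by_contra hxr
    apply hx
    have hxe : Even x := by
      rcases Nat.even_or_odd x with he | ho
      · exact he
      · obtain ⟨c, hc⟩ := ho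
        exact absurd ⟨c, show 2*c+1 = x by omega⟩ hxr
    have hodd : Odd (x+1) := Even.add_one hxe
    simp only [hh, sin_shift, Odd.neg_one_pow (by exact_mod_cast hodd)]
    ring
  exact hinj.tsum_eq hsupp
end

section
/- For real θ and φ with 0 < φ < π/2 and θ, θ+φ in suitable ranges, an antiderivative of θ ↦ ln(tan θ + tan φ) is θ ↦ -θ·ln(cos φ) - (1/2)Cl₂(2θ + 2φ) - (1/2)Cl₂(π - 2θ), i.e. the derivative of the latter expression in θ equals ln(tan θ + tan φ) wherever tan θ + tan φ > 0. -/
open Real Filter Topology MeasureTheory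

namespace Cl2Aux

lemma absSq (r t : ℝ) :
    (‖1 - r * Complex.exp (t * Complex.I)‖) ^ 2
      = (1 - r) ^ 2 + 2 * r * (1 - Real.cos t) := by
  rw [Complex.sq_norm, Complex.normSq_apply]
  simp only [Complex.sub_re, Complex.sub_im, Complex.one_re, Complex.one_im,
    Complex.mul_re, Complex.mul_im, Complex.ofReal_re, Complex.ofReal_im,
    Complex.exp_ofReal_mul_I_re, Complex.exp_ofReal_mul_I_im]
  linear_combination (r^2) * Real.sin_sq_add_cos_sq t

lemma two_sin_sq (t : ℝ) : 2 * Real.sin (t / 2) ^ 2 = 1 - Real.cos t := by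
  have := Real.sin_sq_eq_half_sub (t / 2)
  rw [this]; ring_nf

lemma abs_le_two (r t : ℝ) (hr0 : 0 ≤ r) (hr1 : r ≤ 1) :
    ‖1 - r * Complex.exp (t * Complex.I)‖ ≤ 2 := by
  calc ‖1 - r * Complex.exp (t * Complex.I)‖
      ≤ ‖(1:ℂ)‖ + ‖r * Complex.exp (t * Complex.I)‖ := by
        simpa [sub_eq_add_neg] using norm_add_le (1:ℂ) (-(r * Complex.exp (t * Complex.I)))
    _ ≤ 2 := by
        simp [map_mul, Complex.norm_exp_ofReal_mul_I, Complex.norm_real, abs_of_nonneg hr0]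
        linarith

lemma abs_ge (r t : ℝ) (hr : 1 / 2 ≤ r) (hr1 : r ≤ 1) :
    |Real.sin (t / 2)| ≤ ‖1 - r * Complex.exp (t * Complex.I)‖ := by
  have h1 := absSq r t
  have h2 := two_sin_sq t
  have h3 : (0:ℝ) ≤ ‖1 - r * Complex.exp (t * Complex.I)‖ := norm_nonneg _
  have key : |Real.sin (t / 2)| ^ 2 ≤ (‖1 - r * Complex.exp (t * Complex.I)‖) ^ 2 := by
    rw [sq_abs]; nlinarith [sq_nonneg (Real.sin (t/2))]
  calc |Real.sin (t / 2)| = √(|Real.sin (t / 2)| ^ 2) := (Real.sqrt_sq (abs_nonneg _)).symm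
    _ ≤ √((‖1 - r * Complex.exp (t * Complex.I)‖) ^ 2) := Real.sqrt_le_sqrt key
    _ = _ := Real.sqrt_sq h3

lemma abs_one (t : ℝ) (ht : 0 ≤ t) (ht2 : t ≤ 2 * π) :
    ‖1 - Complex.exp (t * Complex.I)‖ = 2 * Real.sin (t / 2) := by
  have h2 := two_sin_sq t
  have h3 : (0:ℝ) ≤ ‖1 - Complex.exp (t * Complex.I)‖ := norm_nonneg _
  have hs : 0 ≤ Real.sin (t / 2) := Real.sin_nonneg_of_nonneg_of_le_pi (by linarith) (by linarith)
  have heq : ((1:ℂ) - Complex.exp (t * Complex.I)) = 1 - ((1:ℝ):ℂ) * Complex.exp (t * Complex.I) := by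
    push_cast; ring
  have h1 := absSq 1 t
  rw [← heq] at h1
  have key : (‖1 - Complex.exp (t * Complex.I)‖) ^ 2 = (2 * Real.sin (t / 2)) ^ 2 := by
    nlinarith
  calc ‖1 - Complex.exp (t * Complex.I)‖
      = √((‖1 - Complex.exp (t * Complex.I)‖) ^ 2) := (Real.sqrt_sq h3).symm
    _ = √((2 * Real.sin (t / 2)) ^ 2) := by rw [key]
    _ = 2 * Real.sin (t / 2) := Real.sqrt_sq (by positivity)

noncomputable def L (r y : ℝ) : ℝ :=
  ∑' n : ℕ, r ^ (n + 1) * Real.sin (((n : ℝ) + 1) * y) / ((n : ℝ) + 1) ^ 2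

lemma L_hasDerivAt (r : ℝ) (hr0 : 0 ≤ r) (hr1 : r < 1) (x : ℝ) :
    HasDerivAt (L r)
      (∑' n : ℕ, r ^ (n + 1) * Real.cos (((n : ℝ) + 1) * x) / ((n : ℝ) + 1)) x := by
  have hu : Summable (fun n : ℕ => r ^ (n + 1)) := by
    simpa [pow_succ, mul_comm] using (summable_geometric_of_lt_one hr0 hr1).mul_left r
  have hb : ∀ (n : ℕ) (y : ℝ),
      ‖r ^ (n + 1) * Real.cos (((n : ℝ) + 1) * y) / ((n : ℝ) + 1)‖ ≤ r ^ (n + 1) := by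
    intro n y
    have h1 : (1:ℝ) ≤ (n : ℝ) + 1 := by
      have := Nat.cast_nonneg (α := ℝ) n; linarith
    rw [Real.norm_eq_abs, abs_div, abs_mul, abs_of_nonneg (pow_nonneg hr0 _),
      abs_of_nonneg (by positivity : (0:ℝ) ≤ (n:ℝ)+1)]
    calc r ^ (n+1) * |Real.cos (((n : ℝ) + 1) * y)| / ((n:ℝ)+1)
        ≤ r ^ (n+1) * 1 / 1 := by
          gcongr
          · exact Real.abs_cos_le_one _
    _ = r ^ (n+1) := by ring
  have hder : ∀ (n : ℕ) (y : ℝ), HasDerivAt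
      (fun y => r ^ (n + 1) * Real.sin (((n : ℝ) + 1) * y) / ((n : ℝ) + 1) ^ 2)
      (r ^ (n + 1) * Real.cos (((n : ℝ) + 1) * y) / ((n : ℝ) + 1)) y := by
    intro n y
    have h1 : HasDerivAt (fun y : ℝ => Real.sin (((n : ℝ) + 1) * y))
        (Real.cos (((n : ℝ) + 1) * y) * (((n : ℝ) + 1) * 1)) y :=
      (Real.hasDerivAt_sin _).comp y ((hasDerivAt_id y).const_mul _)
    have h2 := (h1.const_mul (r ^ (n + 1))).div_const (((n : ℝ) + 1) ^ 2)
    refine h2.congr_deriv ?_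
    have hne : ((n : ℝ) + 1) ≠ 0 := by positivity
    field_simp
  have hsum : Summable (fun n : ℕ =>
      r ^ (n + 1) * Real.sin (((n : ℝ) + 1) * x) / ((n : ℝ) + 1) ^ 2) := by
    refine Summable.of_norm_bounded hu ?_
    intro n
    have h1 : (1:ℝ) ≤ ((n : ℝ) + 1) ^ 2 := by nlinarith [Nat.cast_nonneg (α := ℝ) n]
    rw [Real.norm_eq_abs, abs_div, abs_mul, abs_of_nonneg (pow_nonneg hr0 _),
      abs_of_nonneg (by positivity : (0:ℝ) ≤ ((n:ℝ)+1)^2)]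
    calc r ^ (n+1) * |Real.sin (((n : ℝ) + 1) * x)| / ((n:ℝ)+1)^2
        ≤ r ^ (n+1) * 1 / 1 := by
          gcongr
          · exact Real.abs_sin_le_one _
    _ = r ^ (n+1) := by ring
  exact hasDerivAt_tsum (u := fun n : ℕ => r ^ (n + 1)) hu hder hb hsum x

lemma D_eq (r x : ℝ) (hr0 : 0 ≤ r) (hr1 : r < 1) :
    (∑' n : ℕ, r ^ (n + 1) * Real.cos (((n : ℝ) + 1) * x) / ((n : ℝ) + 1))
      = -Real.log (‖1 - r * Complex.exp (x * Complex.I)‖) := by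
  set z : ℂ := r * Complex.exp (x * Complex.I) with hz
  have hzn : ‖z‖ < 1 := by
    simpa [hz, map_mul, Complex.norm_exp_ofReal_mul_I,
      Complex.norm_real, abs_of_nonneg hr0] using hr1
  have h := Complex.hasSum_taylorSeries_neg_log hzn
  have hre := Complex.hasSum_re h
  have hterm : ∀ n : ℕ, ((z ^ n / n : ℂ)).re = r ^ n * Real.cos (n * x) / n := by
    intro n
    have hzpow : z ^ n = ((r ^ n : ℝ) : ℂ) * Complex.exp ((n * x : ℝ) * Complex.I) := by
      rw [hz, mul_pow, ← Complex.exp_nat_mul]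
      push_cast
      ring_nf
    rw [hzpow]
    rw [Complex.div_re]
    simp only [Complex.mul_re, Complex.mul_im, Complex.exp_ofReal_mul_I_re,
      Complex.exp_ofReal_mul_I_im, Complex.normSq_apply, Complex.ofReal_re,
      Complex.ofReal_im, Complex.natCast_re, Complex.natCast_im, Complex.ofReal_mul]
    push_cast
    rcases Nat.eq_zero_or_pos n with h0 | h0
    · simp [h0]
    · have hne : ((n : ℝ)) ≠ 0 := by positivity
      have hc : ((n:ℂ) * (x:ℂ)) = ((((n:ℝ) * x : ℝ)) : ℂ) := by push_cast; ring
      rw [hc, Complex.exp_ofReal_mul_I_re]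
      field_simp
      ring
  simp only [hterm] at hre
  have hval : (-(Complex.log (1 - z))).re = -Real.log (‖1 - z‖) := by
    simp [Complex.log_re]
  rw [hval] at hre
  have h2 := (hasSum_nat_add_iff' (f := fun n : ℕ => r ^ n * Real.cos (n * x) / n) 1).mpr hre
  simp only [Finset.range_one, Finset.sum_singleton, Nat.cast_zero] at h2
  norm_num at h2
  rw [← h2.tsum_eq]

lemma cont_abs (r : ℝ) : Continuous (fun t : ℝ => ‖1 - r * Complex.exp (t * Complex.I)‖) :=
  continuous_norm.comp <| continuous_const.sub <| continuous_const.mul <|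
    Complex.continuous_exp.comp <| Complex.continuous_ofReal.mul continuous_const

lemma cont_abs' (t : ℝ) : Continuous (fun s : ℝ => ‖1 - s * Complex.exp (t * Complex.I)‖) :=
  continuous_norm.comp <| continuous_const.sub <|
    (Complex.continuous_ofReal.mul continuous_const)

lemma cont_integrand (r : ℝ) (hr0 : 0 ≤ r) (hr1 : r < 1) :
    Continuous (fun t : ℝ => -Real.log (‖1 - r * Complex.exp (t * Complex.I)‖)) := by
  refine continuous_iff_continuousAt.2 fun t => ?_
  have hpos : 0 < ‖1 - r * Complex.exp (t * Complex.I)‖ := by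
    have h1 : ‖(1:ℂ)‖ - ‖(r : ℂ) * Complex.exp (t * Complex.I)‖ ≤ ‖1 - (r:ℂ) * Complex.exp (t * Complex.I)‖ :=
      norm_sub_norm_le _ _
    have h2 : ‖(r : ℂ) * Complex.exp (t * Complex.I)‖ = r := by
      simp [map_mul, Complex.norm_exp_ofReal_mul_I,
        Complex.norm_real, abs_of_nonneg hr0]
    rw [h2] at h1
    simp only [norm_one] at h1
    calc (0:ℝ) < 1 - r := by linarith
      _ ≤ _ := h1
  exact (((cont_abs r).continuousAt).log (ne_of_gt hpos)).neg

lemma L_sub (r a b : ℝ) (hr0 : 0 ≤ r) (hr1 : r < 1) :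
    L r b - L r a
      = ∫ t in a..b, -Real.log (‖1 - r * Complex.exp (t * Complex.I)‖) := by
  refine (intervalIntegral.integral_eq_sub_of_hasDerivAt (fun t _ => ?_) ?_).symm
  · have h := L_hasDerivAt r hr0 hr1 t
    rwa [D_eq r t hr0 hr1] at h
  · exact (cont_integrand r hr0 hr1).intervalIntegrable a b

lemma cl2_sub {a b : ℝ} (ha : a ∈ Set.Ioo 0 (2*π)) (hb : b ∈ Set.Ioo 0 (2*π)) :
    Cl2 b - Cl2 a = ∫ t in a..b, -Real.log (2 * Real.sin (t / 2)) := by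
  set r : ℕ → ℝ := fun k => 1 - 1/(k+1) with hrdef
  have hr0 : ∀ k, 0 ≤ r k := by
    intro k
    have h1 : 1/((k:ℝ)+1) ≤ 1 := by
      rw [div_le_one (by positivity)]
      simp
    simp only [hrdef]
    linarith
  have hr1 : ∀ k, r k < 1 := by
    intro k
    have h1 : 0 < 1/((k:ℝ)+1) := by positivity
    simp only [hrdef]
    linarith
  have hrlim : Tendsto r atTop (𝓝 1) := by
    have h := tendsto_one_div_add_atTop_nhds_zero_nat (𝕜 := ℝ)
    have h2 : Tendsto (fun _ : ℕ => (1:ℝ)) atTop (𝓝 1) := tendsto_const_nhds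
    simpa [hrdef, one_div] using h2.sub h
  have hsummable : Summable (fun n : ℕ => 1/((n:ℝ)+1)^2) := by
    have h := Real.summable_one_div_nat_pow.mpr (show 1 < 2 by norm_num)
    have h2 := (summable_nat_add_iff 1).mpr h
    refine h2.congr fun n => ?_
    push_cast
    ring
  have hLlim : ∀ c : ℝ, Tendsto (fun k => L (r k) c) atTop (𝓝 (Cl2 c)) := by
    intro c
    refine tendsto_tsum_of_dominated_convergence hsummable (fun n => ?_) ?_
    · have h1 : Tendsto (fun k => (r k) ^ (n+1)) atTop (𝓝 1) := by
        simpa using hrlim.pow (n+1)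
      have h2 := (h1.mul_const (Real.sin (((n:ℝ)+1)*c) / ((n:ℝ)+1)^2))
      simp only [one_mul] at h2
      refine h2.congr fun k => ?_
      ring
    · filter_upwards with k n
      have hk0 := hr0 k
      have hk1 := (hr1 k).le
      have hrp : (r k) ^ (n+1) ≤ 1 := pow_le_one₀ hk0 hk1
      have hrpn : 0 ≤ (r k) ^ (n+1) := pow_nonneg hk0 _
      rw [Real.norm_eq_abs, abs_div, abs_mul, abs_of_nonneg hrpn,
        abs_of_nonneg (by positivity : (0:ℝ) ≤ ((n:ℝ)+1)^2)]
      rw [div_le_div_iff₀ (by positivity) (by positivity)]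
      calc (r k) ^ (n+1) * |Real.sin (((n:ℝ)+1)*c)| * ((n:ℝ)+1)^2
          ≤ 1 * 1 * ((n:ℝ)+1)^2 := by
            gcongr
            exact Real.abs_sin_le_one _
        _ = 1 * ((n:ℝ)+1)^2 := by ring
  -- the subinterval is inside (0, 2π)
  have hsub : Set.uIcc a b ⊆ Set.Ioo 0 (2*π) := by
    intro t ht
    rw [Set.mem_uIcc] at ht
    obtain ⟨h1, h2⟩ := ha
    obtain ⟨h3, h4⟩ := hb
    constructor <;> rcases ht with ⟨u, v⟩ | ⟨u, v⟩ <;> linarith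
  -- minimum of sin (t/2) on uIcc a b
  obtain ⟨t0, ht0, hmin⟩ := isCompact_uIcc.exists_isMinOn (Set.nonempty_uIcc)
    ((Real.continuous_sin.comp (continuous_id.div_const 2)).continuousOn
      (s := Set.uIcc a b))
  have ht0' := hsub ht0
  have hm : 0 < Real.sin (t0/2) :=
    Real.sin_pos_of_pos_of_lt_pi (by linarith [ht0'.1]) (by linarith [ht0'.2])
  set C : ℝ := max (Real.log 2) (-Real.log (Real.sin (t0/2))) with hC
  have habs1 : ∀ t ∈ Set.uIcc a b,
      ‖1 - Complex.exp (t * Complex.I)‖ = 2 * Real.sin (t/2) := by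
    intro t ht
    have ht' := hsub ht
    exact abs_one t (by linarith [ht'.1]) (by linarith [ht'.2])
  have hIlim : Tendsto
      (fun k => ∫ t in a..b, -Real.log (‖1 - (r k) * Complex.exp (t * Complex.I)‖))
      atTop (𝓝 (∫ t in a..b, -Real.log (2 * Real.sin (t / 2)))) := by
    refine intervalIntegral.tendsto_integral_filter_of_dominated_convergence
      (fun _ => C) ?_ ?_ ?_ ?_
    · filter_upwards with k
      exact ((cont_integrand (r k) (hr0 k) (hr1 k)).aestronglyMeasurable)
    · have hhalf : ∀ᶠ k in atTop, 1/2 ≤ r k := by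
        filter_upwards [eventually_ge_atTop 1] with k hk
        have h1 : 1/((k:ℝ)+1) ≤ 1/2 := by
          apply div_le_div_of_nonneg_left (by norm_num) (by norm_num)
          have : (1:ℝ) ≤ (k:ℝ) := by exact_mod_cast hk
          linarith
        simp only [hrdef]
        linarith
      filter_upwards [hhalf] with k hk
      filter_upwards with t ht
      have htu : t ∈ Set.uIcc a b := Set.Ioc_subset_Icc_self ht
      have ht' := hsub htu
      have hs : 0 < Real.sin (t/2) :=
        Real.sin_pos_of_pos_of_lt_pi (by linarith [ht'.1]) (by linarith [ht'.2])
      have hmt : Real.sin (t0/2) ≤ Real.sin (t/2) := hmin htu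
      set A := ‖1 - (r k) * Complex.exp (t * Complex.I)‖ with hA
      have hA2 : A ≤ 2 := abs_le_two _ _ (hr0 k) (hr1 k).le
      have hAm : Real.sin (t0/2) ≤ A := by
        calc Real.sin (t0/2) ≤ Real.sin (t/2) := hmt
          _ = |Real.sin (t/2)| := (abs_of_nonneg hs.le).symm
          _ ≤ A := abs_ge (r k) t hk (hr1 k).le
      have hApos : 0 < A := lt_of_lt_of_le hm hAm
      rw [norm_neg, Real.norm_eq_abs]
      rcases le_or_gt 1 A with h1 | h1
      · rw [abs_of_nonneg (Real.log_nonneg h1)]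
        calc Real.log A ≤ Real.log 2 := Real.log_le_log (by linarith) hA2
          _ ≤ C := le_max_left _ _
      · rw [abs_of_nonpos (Real.log_nonpos (by linarith) h1.le)]
        have := Real.log_le_log hm hAm
        calc -Real.log A ≤ -Real.log (Real.sin (t0/2)) := by linarith
          _ ≤ C := le_max_right _ _
    · exact intervalIntegrable_const
    · filter_upwards with t ht
      have htu : t ∈ Set.uIcc a b := Set.Ioc_subset_Icc_self ht
      have hpos : 0 < ‖1 - Complex.exp (t * Complex.I)‖ := by
        rw [habs1 t htu]
        have ht' := hsub htu
        have := Real.sin_pos_of_pos_of_lt_pi (x := t/2) (by linarith [ht'.1]) (by linarith [ht'.2])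
        linarith
      have hco : ContinuousAt
          (fun s : ℝ => -Real.log (‖1 - s * Complex.exp (t * Complex.I)‖)) 1 := by
        refine ContinuousAt.neg (ContinuousAt.log ((cont_abs' t).continuousAt) ?_)
        simp only [Complex.ofReal_one, one_mul]
        exact ne_of_gt hpos
      have := hco.tendsto.comp hrlim
      simp only [Function.comp, Complex.ofReal_one, one_mul] at this
      rw [habs1 t htu] at this
      exact this
  have heq : ∀ k, L (r k) b - L (r k) a
      = ∫ t in a..b, -Real.log (‖1 - (r k) * Complex.exp (t * Complex.I)‖) :=
    fun k => L_sub (r k) a b (hr0 k) (hr1 k)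
  have h1 : Tendsto (fun k => L (r k) b - L (r k) a) atTop (𝓝 (Cl2 b - Cl2 a)) :=
    (hLlim b).sub (hLlim a)
  have h2 : Tendsto (fun k => L (r k) b - L (r k) a) atTop
      (𝓝 (∫ t in a..b, -Real.log (2 * Real.sin (t / 2)))) := by
    simp only [heq]
    exact hIlim
  exact tendsto_nhds_unique h1 h2

lemma cl2_hasDerivAt {x : ℝ} (hx0 : 0 < x) (hx2 : x < 2*π) :
    HasDerivAt Cl2 (-Real.log (2 * Real.sin (x/2))) x := by
  have hpi : 0 < π := Real.pi_pos
  set f : ℝ → ℝ := fun t => -Real.log (2 * Real.sin (t/2)) with hf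
  have hfc : ∀ t ∈ Set.Ioo (0:ℝ) (2*π), ContinuousAt f t := by
    intro t ht
    have hs : 0 < Real.sin (t/2) :=
      Real.sin_pos_of_pos_of_lt_pi (by linarith [ht.1]) (by linarith [ht.2])
    exact (ContinuousAt.log ((continuous_const.mul
      (Real.continuous_sin.comp (continuous_id.div_const 2))).continuousAt)
      (mul_pos two_pos hs).ne').neg
  have hfcOn : ContinuousOn f (Set.Ioo 0 (2*π)) :=
    fun t ht => (hfc t ht).continuousWithinAt
  have hax : x/2 ∈ Set.Ioo (0:ℝ) (2*π) := ⟨by linarith, by linarith⟩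
  have hxmem : x ∈ Set.Ioo (0:ℝ) (2*π) := ⟨hx0, hx2⟩
  have hint : IntervalIntegrable f MeasureTheory.volume (x/2) x := by
    refine ContinuousOn.intervalIntegrable (hfcOn.mono ?_)
    intro t ht
    rw [Set.mem_uIcc] at ht
    constructor <;> rcases ht with ⟨u, v⟩ | ⟨u, v⟩ <;> (first | linarith)
  have hmeas : StronglyMeasurableAtFilter f (𝓝 x) MeasureTheory.volume :=
    ⟨Set.Ioo 0 (2*π), Ioo_mem_nhds hx0 hx2,
      hfcOn.aestronglyMeasurable measurableSet_Ioo⟩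
  have hG : HasDerivAt (fun y => Cl2 (x/2) + ∫ t in (x/2)..y, f t) (f x) x :=
    (intervalIntegral.integral_hasDerivAt_right hint hmeas (hfc x hxmem)).const_add (Cl2 (x/2))
  refine hG.congr_of_eventuallyEq ?_
  have hmem : Set.Ioo (x/2) ((x + 2*π)/2) ∈ 𝓝 x :=
    Ioo_mem_nhds (by linarith) (by linarith)
  filter_upwards [hmem] with y hy
  have hymem : y ∈ Set.Ioo (0:ℝ) (2*π) := ⟨by linarith [hy.1], by linarith [hy.2]⟩
  have := cl2_sub hax hymem
  simp only [hf] at this ⊢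
  linarith

end Cl2Aux

theorem stmt9 (φ θ : ℝ) (hφ : 0 < φ) (hφ' : φ < π / 2)
    (hθ : 0 < θ) (hθ' : θ < π / 2)
    (hpos : Real.tan θ + Real.tan φ > 0) :
    HasDerivAt (fun x : ℝ => -x * Real.log (Real.cos φ)
        - (1 / 2) * Cl2 (2 * x + 2 * φ) - (1 / 2) * Cl2 (π - 2 * x))
      (Real.log (Real.tan θ + Real.tan φ)) θ := by
  have hpi : 0 < π := Real.pi_pos
  have hin1 := Cl2Aux.cl2_hasDerivAt (x := 2*θ+2*φ) (by linarith) (by linarith)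
  have hlin1 : HasDerivAt (fun x : ℝ => 2*x + 2*φ) 2 θ := by
    simpa using ((hasDerivAt_id θ).const_mul 2).add_const (2*φ)
  have hc1 := hin1.comp θ hlin1
  have hin2 := Cl2Aux.cl2_hasDerivAt (x := π - 2*θ) (by linarith) (by linarith)
  have hlin2 : HasDerivAt (fun x : ℝ => π - 2*x) (-2) θ := by
    simpa using ((hasDerivAt_id θ).const_mul 2).const_sub π
  have hc2 := hin2.comp θ hlin2
  have h3 : HasDerivAt (fun x : ℝ => -x * Real.log (Real.cos φ)) (-Real.log (Real.cos φ)) θ := by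
    simpa using ((hasDerivAt_id θ).neg.mul_const (Real.log (Real.cos φ)))
  have H := (h3.sub (hc1.const_mul (1/2 : ℝ))).sub (hc2.const_mul (1/2 : ℝ))
  simp only [Function.comp_def] at H
  refine H.congr_deriv ?_
  -- value computation
  have hcθ : 0 < Real.cos θ := Real.cos_pos_of_mem_Ioo ⟨by linarith, hθ'⟩
  have hcφ : 0 < Real.cos φ := Real.cos_pos_of_mem_Ioo ⟨by linarith, hφ'⟩
  have hsθφ : 0 < Real.sin (θ + φ) :=
    Real.sin_pos_of_pos_of_lt_pi (by linarith) (by linarith)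
  have htan : Real.tan θ + Real.tan φ = Real.sin (θ + φ) / (Real.cos θ * Real.cos φ) := by
    rw [Real.tan_eq_sin_div_cos, Real.tan_eq_sin_div_cos, Real.sin_add]
    field_simp
  rw [show (2*θ+2*φ)/2 = θ + φ by ring, show (π-2*θ)/2 = π/2 - θ by ring,
    Real.sin_pi_div_two_sub, htan,
    Real.log_div (by positivity) (by positivity),
    Real.log_mul (by norm_num) (ne_of_gt hsθφ),
    Real.log_mul (by norm_num) (ne_of_gt hcθ),
    Real.log_mul (ne_of_gt hcθ) (ne_of_gt hcφ)]
  ring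
end

section
/- For 0 < x < φ < π/2, ∫_x^φ ln((tan φ + tan θ)/(tan φ - tan θ)) dθ = (1/2)Cl₂(2x + 2φ) - (1/2)Cl₂(2x - 2φ) - (1/2)Cl₂(4φ). -/
open Real Filter MeasureTheory intervalIntegral Set Topology

set_option maxHeartbeats 1000000

namespace ClausenAux


lemma summable_inv_sq : Summable (fun m : ℕ => 1 / ((m : ℝ) + 1) ^ 2) := by
  have h := (summable_nat_add_iff (f := fun n : ℕ => 1 / (n : ℝ) ^ 2) 1).mpr
    (Real.summable_one_div_nat_pow.mpr one_lt_two)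
  refine h.congr fun n => by push_cast; ring

lemma norm_term_le (θ : ℝ) (m : ℕ) :
    ‖Real.sin (((m : ℝ) + 1) * θ) / ((m : ℝ) + 1) ^ 2‖ ≤ 1 / ((m : ℝ) + 1) ^ 2 := by
  have h1 : (0 : ℝ) < ((m : ℝ) + 1) ^ 2 := by positivity
  rw [norm_div, Real.norm_eq_abs, Real.norm_eq_abs, abs_of_pos h1, div_le_div_iff₀ h1 h1]
  have := Real.abs_sin_le_one (((m : ℝ) + 1) * θ)
  nlinarith [sq_nonneg ((m : ℝ) + 1)]

lemma summable_Cl2 (θ : ℝ) :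
    Summable (fun m : ℕ => Real.sin (((m : ℝ) + 1) * θ) / ((m : ℝ) + 1) ^ 2) :=
  Summable.of_norm_bounded summable_inv_sq (norm_term_le θ)

lemma Cl2_continuous : Continuous Cl2 := by
  refine continuous_tsum (fun m => ?_) summable_inv_sq (fun m θ => norm_term_le θ m)
  exact (Real.continuous_sin.comp (continuous_const.mul continuous_id)).div_const _

lemma Cl2_neg (θ : ℝ) : Cl2 (-θ) = - Cl2 θ := by
  unfold Cl2
  rw [← tsum_neg]
  congr 1
  funext m
  rw [mul_neg, Real.sin_neg, neg_div]

lemma Cl2_zero : Cl2 0 = 0 := by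
  unfold Cl2
  simp



lemma hasSum_cos_r {r : ℝ} (h0 : 0 ≤ r) (h1 : r < 1) (t : ℝ) :
    HasSum (fun m : ℕ => r ^ (m + 1) * Real.cos (((m : ℝ) + 1) * t) / ((m : ℝ) + 1))
      (- Real.log (‖1 - (r : ℂ) * Complex.exp ((t : ℂ) * Complex.I)‖)) := by
  set z : ℂ := (r : ℂ) * Complex.exp ((t : ℂ) * Complex.I) with hz
  have hnorm : ‖z‖ < 1 := by
    rw [hz]
    rw [norm_mul, Complex.norm_real, Complex.norm_exp_ofReal_mul_I]
    simpa [abs_of_nonneg h0] using h1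
  have H := Complex.hasSum_taylorSeries_neg_log hnorm
  have Hre : HasSum (fun n : ℕ => (z ^ n / (n : ℂ)).re) ((- Complex.log (1 - z)).re) :=
    Complex.hasSum_re H
  have hterm : ∀ n : ℕ, (z ^ n / (n : ℂ)).re = r ^ n * Real.cos ((n : ℝ) * t) / (n : ℝ) := by
    intro n
    have hzn : z ^ n / (n : ℂ) =
        ((r ^ n / (n : ℝ) : ℝ) : ℂ) * Complex.exp ((((n : ℝ) * t : ℝ) : ℂ) * Complex.I) := by
      rw [hz, mul_pow, ← Complex.exp_nat_mul]
      push_cast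
      ring
    rw [hzn, Complex.re_ofReal_mul, Complex.exp_ofReal_mul_I_re]
    ring
  have Hre' : HasSum (fun n : ℕ => r ^ n * Real.cos ((n : ℝ) * t) / (n : ℝ))
      (- Real.log (‖1 - z‖)) := by
    have hval : (- Complex.log (1 - z)).re = - Real.log (‖1 - z‖) := by
      rw [Complex.neg_re, Complex.log_re]
    rw [← funext hterm, ← hval]
    exact Hre
  have Hshift := (hasSum_nat_add_iff' (f := fun n : ℕ => r ^ n * Real.cos ((n : ℝ) * t) / (n : ℝ))
    1).mpr Hre'
  simp only [Finset.range_one, Finset.sum_singleton, Nat.cast_zero, Nat.cast_add, Nat.cast_one,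
    div_zero, sub_zero] at Hshift
  convert Hshift using 2 with m



lemma abs_one_sub_exp {t : ℝ} (h0 : 0 ≤ t) (h2 : t ≤ 2 * π) :
    ‖1 - Complex.exp ((t : ℂ) * Complex.I)‖ = 2 * Real.sin (t / 2) := by
  have hsq : ‖1 - Complex.exp ((t : ℂ) * Complex.I)‖ ^ 2 = 2 - 2 * Real.cos t := by
    rw [Complex.sq_norm, Complex.normSq_apply]
    simp only [Complex.sub_re, Complex.sub_im, Complex.one_re, Complex.one_im,
      Complex.exp_ofReal_mul_I_re, Complex.exp_ofReal_mul_I_im]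
    nlinarith [Real.sin_sq_add_cos_sq t]
  have hcos : Real.cos t = 1 - 2 * Real.sin (t / 2) ^ 2 := by
    have h := Real.cos_two_mul (t / 2)
    rw [show 2 * (t / 2) = t by ring] at h
    nlinarith [Real.sin_sq_add_cos_sq (t / 2)]
  have hs : 0 ≤ Real.sin (t / 2) :=
    Real.sin_nonneg_of_nonneg_of_le_pi (by linarith) (by linarith)
  have habs : 0 ≤ ‖1 - Complex.exp ((t : ℂ) * Complex.I)‖ := norm_nonneg _
  nlinarith [hsq, hcos, hs, habs]

lemma abs_lower {r : ℝ} (h0 : 0 ≤ r) (h1 : r ≤ 1) (t : ℝ) :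
    Real.sin (t / 2) ≤ ‖1 - (r : ℂ) * Complex.exp ((t : ℂ) * Complex.I)‖ := by
  have habs : 0 ≤ ‖1 - (r : ℂ) * Complex.exp ((t : ℂ) * Complex.I)‖ :=
    norm_nonneg _
  rcases le_or_gt (Real.sin (t / 2)) 0 with h | h
  · linarith
  have hsq : ‖1 - (r : ℂ) * Complex.exp ((t : ℂ) * Complex.I)‖ ^ 2 =
      1 - 2 * r * Real.cos t + r ^ 2 := by
    rw [Complex.sq_norm, Complex.normSq_apply]
    simp only [Complex.sub_re, Complex.sub_im, Complex.one_re, Complex.one_im,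
      Complex.mul_re, Complex.mul_im, Complex.ofReal_re, Complex.ofReal_im,
      Complex.exp_ofReal_mul_I_re, Complex.exp_ofReal_mul_I_im]
    nlinarith [Real.sin_sq_add_cos_sq t]
  have hcos : Real.cos t = 1 - 2 * Real.sin (t / 2) ^ 2 := by
    have hh := Real.cos_two_mul (t / 2)
    rw [show 2 * (t / 2) = t by ring] at hh
    nlinarith [Real.sin_sq_add_cos_sq (t / 2)]
  have hsin2 : Real.sin (t / 2) ^ 2 ≤
      ‖1 - (r : ℂ) * Complex.exp ((t : ℂ) * Complex.I)‖ ^ 2 := by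
    rw [hsq]
    have hc1 : Real.cos t ≤ 1 := Real.cos_le_one t
    have hc2 : -1 ≤ Real.cos t := Real.neg_one_le_cos t
    nlinarith [sq_nonneg (r - Real.cos t), sq_nonneg (1 - r), mul_nonneg h0 (sub_nonneg.mpr hc1)]
  nlinarith [hsin2, habs, h]

lemma abs_upper {r : ℝ} (h0 : 0 ≤ r) (h1 : r ≤ 1) (t : ℝ) :
    ‖1 - (r : ℂ) * Complex.exp ((t : ℂ) * Complex.I)‖ ≤ 2 := by
  calc ‖1 - (r : ℂ) * Complex.exp ((t : ℂ) * Complex.I)‖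
      ≤ ‖(1:ℂ)‖ + ‖(r : ℂ) * Complex.exp ((t : ℂ) * Complex.I)‖ := by
        simpa [sub_eq_add_neg] using norm_add_le (1:ℂ) (-((r : ℂ) * Complex.exp ((t : ℂ) * Complex.I)))
    _ ≤ 2 := by
        rw [norm_mul, Complex.norm_exp_ofReal_mul_I, norm_one, Complex.norm_real, Real.norm_eq_abs,
          abs_of_nonneg h0]
        linarith

lemma sin_endpoint_min {u v t : ℝ} (hu : 0 ≤ u) (hv : v ≤ π) (h1 : u ≤ t) (h2 : t ≤ v) :
    min (Real.sin u) (Real.sin v) ≤ Real.sin t := by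
  rcases le_total t (π / 2) with h | h
  · exact (min_le_left _ _).trans
      (Real.sin_le_sin_of_le_of_le_pi_div_two (by linarith [Real.pi_pos]) h h1)
  · refine (min_le_right _ _).trans ?_
    rw [← Real.sin_pi_sub v, ← Real.sin_pi_sub t]
    exact Real.sin_le_sin_of_le_of_le_pi_div_two (by linarith) (by linarith) (by linarith)

lemma integral_eq_tsum {r : ℝ} (h0 : 0 ≤ r) (h1 : r < 1) (a b : ℝ) :
    (∫ t in a..b, - Real.log (‖1 - (r : ℂ) * Complex.exp ((t : ℂ) * Complex.I)‖)) =
      ∑' m : ℕ, r ^ (m + 1) * (Real.sin (((m : ℝ) + 1) * b) - Real.sin (((m : ℝ) + 1) * a))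
        / ((m : ℝ) + 1) ^ 2 := by
  set F : ℕ → ℝ → ℝ :=
    fun N t => ∑ m ∈ Finset.range N, r ^ (m + 1) * Real.cos (((m : ℝ) + 1) * t) / ((m : ℝ) + 1)
    with hF
  have hgeom : Summable (fun m : ℕ => r ^ m) := summable_geometric_of_lt_one h0 h1
  have htermbound : ∀ N t, ‖F N t‖ ≤ (1 - r)⁻¹ := by
    intro N t
    calc ‖F N t‖ ≤ ∑ m ∈ Finset.range N, ‖r ^ (m + 1) * Real.cos (((m : ℝ) + 1) * t) / ((m : ℝ) + 1)‖ :=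
          norm_sum_le _ _
      _ ≤ ∑ m ∈ Finset.range N, r ^ m := by
          refine Finset.sum_le_sum fun m _ => ?_
          have hm1 : (1 : ℝ) ≤ (m : ℝ) + 1 := by linarith [Nat.cast_nonneg (α := ℝ) m]
          have hcos := Real.abs_cos_le_one (((m : ℝ) + 1) * t)
          have hrp : (0:ℝ) ≤ r ^ m := pow_nonneg h0 m
          have : ‖r ^ (m + 1) * Real.cos (((m : ℝ) + 1) * t) / ((m : ℝ) + 1)‖
              ≤ r ^ (m + 1) := by
            rw [norm_div, norm_mul, Real.norm_eq_abs, Real.norm_eq_abs, Real.norm_eq_abs,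
              abs_of_nonneg (pow_nonneg h0 _), abs_of_nonneg (by positivity : (0:ℝ) ≤ (m:ℝ)+1)]
            rw [div_le_iff₀ (by positivity)]
            nlinarith [pow_nonneg h0 (m+1)]
          refine this.trans ?_
          rw [pow_succ]
          nlinarith
      _ ≤ ∑' m : ℕ, r ^ m := hgeom.sum_le_tsum _ (fun m _ => pow_nonneg h0 m)
      _ = (1 - r)⁻¹ := tsum_geometric_of_lt_one h0 h1
  have hlim : Tendsto (fun N => ∫ t in a..b, F N t) atTop
      (𝓝 (∫ t in a..b, - Real.log (‖1 - (r : ℂ) * Complex.exp ((t : ℂ) * Complex.I)‖))) := by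
    refine intervalIntegral.tendsto_integral_filter_of_dominated_convergence
      (bound := fun _ => (1 - r)⁻¹) ?_ ?_ ?_ ?_
    · refine Eventually.of_forall fun N => Continuous.aestronglyMeasurable ?_
      exact continuous_finset_sum _ fun m _ => by fun_prop
    · exact Eventually.of_forall fun N =>
        (Eventually.of_forall fun t _ => htermbound N t)
    · exact intervalIntegrable_const
    · exact Eventually.of_forall fun t _ => (hasSum_cos_r h0 h1 t).tendsto_sum_nat
  have hint : ∀ N, (∫ t in a..b, F N t) = ∑ m ∈ Finset.range N,
      r ^ (m + 1) * (Real.sin (((m : ℝ) + 1) * b) - Real.sin (((m : ℝ) + 1) * a))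
        / ((m : ℝ) + 1) ^ 2 := by
    intro N
    rw [hF, intervalIntegral.integral_finset_sum]
    · refine Finset.sum_congr rfl fun m _ => ?_
      have hrw : ∀ t : ℝ, r ^ (m + 1) * Real.cos (((m : ℝ) + 1) * t) / ((m : ℝ) + 1)
          = (r ^ (m + 1) / ((m : ℝ) + 1)) * Real.cos (((m : ℝ) + 1) * t) := fun t => by ring
      simp only [hrw]
      rw [intervalIntegral.integral_const_mul]
      have hm0 : ((m : ℝ) + 1) ≠ 0 := by positivity
      rw [intervalIntegral.integral_comp_mul_left (fun s => Real.cos s) hm0]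
      rw [integral_cos, smul_eq_mul, eq_div_iff (pow_ne_zero 2 hm0)]
      field_simp
    · intro m _
      exact (by fun_prop : Continuous fun t : ℝ =>
        r ^ (m + 1) * Real.cos (((m : ℝ) + 1) * t) / ((m : ℝ) + 1)).intervalIntegrable a b
  have hsum : Summable (fun m : ℕ =>
      r ^ (m + 1) * (Real.sin (((m : ℝ) + 1) * b) - Real.sin (((m : ℝ) + 1) * a))
        / ((m : ℝ) + 1) ^ 2) := by
    refine Summable.of_norm_bounded (hgeom.mul_left 2) fun m => ?_
    have h1m : (1 : ℝ) ≤ ((m : ℝ) + 1) ^ 2 := by nlinarith [Nat.cast_nonneg (α := ℝ) m]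
    rw [norm_div, norm_mul, Real.norm_eq_abs, Real.norm_eq_abs, Real.norm_eq_abs,
      abs_of_nonneg (pow_nonneg h0 _), abs_of_nonneg (by positivity : (0:ℝ) ≤ ((m:ℝ)+1)^2)]
    have hsin : |Real.sin (((m : ℝ) + 1) * b) - Real.sin (((m : ℝ) + 1) * a)| ≤ 2 := by
      have s1 := Real.abs_sin_le_one (((m : ℝ) + 1) * b)
      have s2 := Real.abs_sin_le_one (((m : ℝ) + 1) * a)
      calc |Real.sin (((m : ℝ) + 1) * b) - Real.sin (((m : ℝ) + 1) * a)|
          ≤ |Real.sin (((m : ℝ) + 1) * b)| + |Real.sin (((m : ℝ) + 1) * a)| := abs_sub _ _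
        _ ≤ 2 := by linarith
    have hrm : r ^ (m + 1) ≤ r ^ m := by
      rw [pow_succ]
      nlinarith [pow_nonneg h0 m]
    rw [div_le_iff₀ (by positivity)]
    have hrp := pow_nonneg h0 (m + 1)
    nlinarith [pow_nonneg h0 m]
  have hlim2 : Tendsto (fun N => ∫ t in a..b, F N t) atTop
      (𝓝 (∑' m : ℕ, r ^ (m + 1) * (Real.sin (((m : ℝ) + 1) * b) - Real.sin (((m : ℝ) + 1) * a))
        / ((m : ℝ) + 1) ^ 2)) := by
    refine Tendsto.congr (fun N => (hint N).symm) ?_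
    exact hsum.hasSum.tendsto_sum_nat
  exact tendsto_nhds_unique hlim hlim2

lemma clausen_integral {a b : ℝ} (ha : 0 < a) (hab : a ≤ b) (hb : b < 2 * π) :
    (∫ t in a..b, - Real.log (2 * Real.sin (t / 2))) = Cl2 b - Cl2 a := by
  have hπ := Real.pi_pos
  set l : Filter ℝ := 𝓝[<] (1 : ℝ)
  have hev : Ioo (1 / 2 : ℝ) 1 ∈ l := Ioo_mem_nhdsLT_of_mem (by norm_num)
  set m0 : ℝ := min (Real.sin (a / 2)) (Real.sin (b / 2)) with hm0
  have hm0pos : 0 < m0 := by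
    refine lt_min ?_ ?_
    · exact Real.sin_pos_of_pos_of_lt_pi (by linarith) (by linarith)
    · exact Real.sin_pos_of_pos_of_lt_pi (by linarith) (by linarith)
  have hmin : ∀ t ∈ Set.Ioc a b, m0 ≤ Real.sin (t / 2) := by
    intro t ht
    exact sin_endpoint_min (by linarith) (by linarith) (by linarith [ht.1]) (by linarith [ht.2])
  -- LHS limit
  set Φ : ℝ → ℝ := fun r =>
    ∫ t in a..b, - Real.log (‖1 - (r : ℂ) * Complex.exp ((t : ℂ) * Complex.I)‖)
    with hΦ
  have hL : Tendsto Φ l (𝓝 (∫ t in a..b, - Real.log (2 * Real.sin (t / 2)))) := by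
    refine intervalIntegral.tendsto_integral_filter_of_dominated_convergence
      (bound := fun _ => |Real.log m0| + |Real.log 2|) ?_ ?_ ?_ ?_
    · refine Eventually.of_forall fun r => ?_
      have hc0 : Continuous fun t : ℝ => (1 - (r : ℂ) * Complex.exp ((t : ℂ) * Complex.I)) := by
        fun_prop
      have hc : Continuous fun t : ℝ =>
          ‖1 - (r : ℂ) * Complex.exp ((t : ℂ) * Complex.I)‖ :=
        continuous_norm.comp hc0
      exact (Real.measurable_log.comp hc.measurable).neg.aestronglyMeasurable
    · filter_upwards [hev] with r hr
      refine Eventually.of_forall fun t ht => ?_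
      rw [Set.uIoc_of_le hab] at ht
      have h0r : (0:ℝ) ≤ r := by linarith [hr.1]
      have h1r : r ≤ 1 := le_of_lt hr.2
      have hlow : m0 ≤ ‖1 - (r : ℂ) * Complex.exp ((t : ℂ) * Complex.I)‖ :=
        (hmin t ht).trans (abs_lower h0r h1r t)
      have hup := abs_upper h0r h1r t
      have hmpos : (0:ℝ) < ‖1 - (r : ℂ) * Complex.exp ((t : ℂ) * Complex.I)‖ :=
        lt_of_lt_of_le hm0pos hlow
      have e1 : Real.log m0 ≤ Real.log (‖1 - (r : ℂ) * Complex.exp ((t : ℂ) * Complex.I)‖) :=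
        Real.log_le_log hm0pos hlow
      have e2 : Real.log (‖1 - (r : ℂ) * Complex.exp ((t : ℂ) * Complex.I)‖) ≤ Real.log 2 :=
        Real.log_le_log hmpos hup
      rw [Real.norm_eq_abs, abs_neg]
      have l2 : (0:ℝ) ≤ Real.log 2 := Real.log_nonneg (by norm_num)
      rw [abs_le]
      constructor
      · have : -(|Real.log m0|) ≤ Real.log m0 := neg_abs_le _
        linarith [abs_nonneg (Real.log 2)]
      · have : Real.log 2 ≤ |Real.log 2| := le_abs_self _
        linarith [abs_nonneg (Real.log m0)]
    · exact intervalIntegrable_const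
    · refine Eventually.of_forall fun t ht => ?_
      rw [Set.uIoc_of_le hab] at ht
      have habs : ‖1 - Complex.exp ((t : ℂ) * Complex.I)‖ = 2 * Real.sin (t / 2) :=
        abs_one_sub_exp (by linarith [ht.1]) (by linarith [ht.2])
      have hpos : 0 < 2 * Real.sin (t / 2) := by
        have := hmin t ht
        linarith
      have hcont : ContinuousAt (fun r : ℝ =>
          - Real.log (‖1 - (r : ℂ) * Complex.exp ((t : ℂ) * Complex.I)‖)) 1 := by
        refine ContinuousAt.neg ?_
        refine (Real.continuousAt_log ?_).comp ?_
        · rw [Complex.ofReal_one, one_mul, habs]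
          exact ne_of_gt hpos
        · exact (continuous_norm.comp (continuous_const.sub
            ((Complex.continuous_ofReal).mul continuous_const))).continuousAt
      have h2' : Tendsto (fun r : ℝ =>
          - Real.log (‖1 - (r : ℂ) * Complex.exp ((t : ℂ) * Complex.I)‖)) (𝓝 1)
          (𝓝 (- Real.log (2 * Real.sin (t / 2)))) := by
        have := hcont.tendsto
        rwa [Complex.ofReal_one, one_mul, habs] at this
      exact h2'.mono_left nhdsWithin_le_nhds
  -- RHS limit
  set Ψ : ℝ → ℝ := fun r =>
    ∑' m : ℕ, r ^ (m + 1) * (Real.sin (((m : ℝ) + 1) * b) - Real.sin (((m : ℝ) + 1) * a))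
      / ((m : ℝ) + 1) ^ 2 with hΨ
  have hR : Tendsto Ψ l (𝓝 (Cl2 b - Cl2 a)) := by
    have hgoal : Cl2 b - Cl2 a = ∑' m : ℕ,
        (Real.sin (((m : ℝ) + 1) * b) - Real.sin (((m : ℝ) + 1) * a)) / ((m : ℝ) + 1) ^ 2 := by
      rw [Cl2, Cl2, ← Summable.tsum_sub (summable_Cl2 b) (summable_Cl2 a)]
      congr 1
      funext m
      rw [sub_div]
    rw [hgoal]
    have h2 : Tendsto (fun r : ℝ => Ψ r) l (𝓝 (∑' m : ℕ,
        (1:ℝ) ^ (m + 1) * (Real.sin (((m : ℝ) + 1) * b) - Real.sin (((m : ℝ) + 1) * a))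
          / ((m : ℝ) + 1) ^ 2)) := by
      refine tendsto_tsum_of_dominated_convergence
        (bound := fun m : ℕ => 2 / ((m : ℝ) + 1) ^ 2) ?_ ?_ ?_
      · have : Summable (fun m : ℕ => (2:ℝ) * (1 / ((m : ℝ) + 1) ^ 2)) :=
          summable_inv_sq.mul_left 2
        refine this.congr fun m => by ring
      · intro m
        refine Tendsto.mono_left ?_ nhdsWithin_le_nhds
        exact (Continuous.tendsto (by fun_prop) 1)
      · filter_upwards [hev] with r hr
        intro m
        have h0r : (0:ℝ) ≤ r := by linarith [hr.1]
        have h1r : r ≤ 1 := le_of_lt hr.2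
        have hrp : r ^ (m + 1) ≤ 1 := pow_le_one₀ h0r h1r
        have hrnn : 0 ≤ r ^ (m + 1) := pow_nonneg h0r _
        rw [norm_div, norm_mul, Real.norm_eq_abs, Real.norm_eq_abs, Real.norm_eq_abs,
          abs_of_nonneg hrnn, abs_of_nonneg (by positivity : (0:ℝ) ≤ ((m:ℝ)+1)^2)]
        have hsin : |Real.sin (((m : ℝ) + 1) * b) - Real.sin (((m : ℝ) + 1) * a)| ≤ 2 := by
          have s1 := Real.abs_sin_le_one (((m : ℝ) + 1) * b)
          have s2 := Real.abs_sin_le_one (((m : ℝ) + 1) * a)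
          calc |Real.sin (((m : ℝ) + 1) * b) - Real.sin (((m : ℝ) + 1) * a)|
              ≤ |Real.sin (((m : ℝ) + 1) * b)| + |Real.sin (((m : ℝ) + 1) * a)| := abs_sub _ _
            _ ≤ 2 := by linarith
        have hp : (0:ℝ) < ((m:ℝ)+1)^2 := by positivity
        rw [div_le_div_iff₀ hp hp]
        have key : r ^ (m + 1) * |Real.sin (((m : ℝ) + 1) * b) - Real.sin (((m : ℝ) + 1) * a)| ≤ 2 := by
          nlinarith [abs_nonneg (Real.sin (((m : ℝ) + 1) * b) - Real.sin (((m : ℝ) + 1) * a))]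
        linarith [mul_le_mul_of_nonneg_right key hp.le]
    simpa using h2
  have hEq : Φ =ᶠ[l] Ψ := by
    filter_upwards [hev] with r hr
    exact integral_eq_tsum (by linarith [hr.1]) hr.2 a b
  exact tendsto_nhds_unique (hL.congr' hEq) hR



lemma intervalIntegrable_log_sub {c d : ℝ} (h : c < d) :
    IntervalIntegrable (fun θ : ℝ => Real.log (d - θ)) volume c d := by
  set K : ℝ := max 0 (Real.log (d - c)) with hK
  have key : IntervalIntegrable (fun θ : ℝ => K - Real.log (d - θ)) volume c d := by
    set g : ℝ → ℝ := fun θ => K * θ + ((d - θ) * Real.log (d - θ) - (d - θ)) with hg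
    have hcont : ContinuousOn g (Set.uIcc c d) := by
      refine Continuous.continuousOn ?_
      refine (continuous_const.mul continuous_id).add (Continuous.sub ?_ ?_)
      · exact Real.continuous_mul_log.comp (continuous_const.sub continuous_id)
      · exact continuous_const.sub continuous_id
    refine intervalIntegrable_deriv_of_nonneg hcont ?_ ?_
    · intro θ hθ
      rw [min_eq_left h.le, max_eq_right h.le] at hθ
      have hd : d - θ ≠ 0 := by
        have := hθ.2
        intro hc0
        simp only [sub_eq_zero] at hc0
        linarith
      have h1 : HasDerivAt (fun θ : ℝ => d - θ) (-1) θ := by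
        simpa using (hasDerivAt_id θ).const_sub d
      have h2 : HasDerivAt (fun u : ℝ => u * Real.log u) (Real.log (d - θ) + 1) (d - θ) :=
        Real.hasDerivAt_mul_log hd
      have h3 : HasDerivAt (fun θ : ℝ => (d - θ) * Real.log (d - θ))
          ((Real.log (d - θ) + 1) * (-1)) θ := h2.comp θ h1
      have h4 : HasDerivAt g (K + ((Real.log (d - θ) + 1) * (-1) - (-1))) θ := by
        refine HasDerivAt.add ?_ (h3.sub h1)
        simpa using (hasDerivAt_id θ).const_mul K
      convert h4 using 1
      ring
    · intro θ hθ
      rw [min_eq_left h.le, max_eq_right h.le] at hθ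
      have h1 : Real.log (d - θ) ≤ Real.log (d - c) :=
        Real.log_le_log (by linarith [hθ.2]) (by linarith [hθ.1])
      have h2 : Real.log (d - c) ≤ K := le_max_right _ _
      linarith
  have hrw : (fun θ : ℝ => Real.log (d - θ)) = fun θ : ℝ => K - (K - Real.log (d - θ)) := by
    funext θ; ring
  rw [hrw]
  exact (_root_.intervalIntegrable_const).sub key

lemma integrand_eq {φ : ℝ} (hφ1 : 0 < φ) (h3 : φ < π / 2) {θ : ℝ} (hθ0 : 0 < θ) (hθ : θ < φ) :
    Real.log ((Real.tan φ + Real.tan θ) / (Real.tan φ - Real.tan θ)) =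
      Real.log (Real.sin (φ + θ)) - Real.log (Real.sin (φ - θ)) := by
  have hπ := Real.pi_pos
  have hcθ : 0 < Real.cos θ := Real.cos_pos_of_mem_Ioo ⟨by linarith, by linarith⟩
  have hcφ : 0 < Real.cos φ := Real.cos_pos_of_mem_Ioo ⟨by linarith, by linarith⟩
  have hsp : 0 < Real.sin (φ + θ) :=
    Real.sin_pos_of_pos_of_lt_pi (by linarith) (by linarith)
  have hsm : 0 < Real.sin (φ - θ) :=
    Real.sin_pos_of_pos_of_lt_pi (by linarith) (by linarith)
  have e1 : Real.tan φ + Real.tan θ = Real.sin (φ + θ) / (Real.cos φ * Real.cos θ) := by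
    rw [Real.tan_eq_sin_div_cos, Real.tan_eq_sin_div_cos, Real.sin_add]
    field_simp
  have e2 : Real.tan φ - Real.tan θ = Real.sin (φ - θ) / (Real.cos φ * Real.cos θ) := by
    rw [Real.tan_eq_sin_div_cos, Real.tan_eq_sin_div_cos, Real.sin_sub]
    field_simp
  have e3 : (Real.tan φ + Real.tan θ) / (Real.tan φ - Real.tan θ)
      = Real.sin (φ + θ) / Real.sin (φ - θ) := by
    rw [e1, e2]
    field_simp
  rw [e3, Real.log_div hsp.ne' hsm.ne']


end ClausenAux

open ClausenAux

theorem stmt11 (x φ : ℝ) (h1 : 0 < x) (h2 : x < φ) (h3 : φ < π / 2) :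
    ∫ θ in x..φ, Real.log ((Real.tan φ + Real.tan θ) / (Real.tan φ - Real.tan θ)) =
      (1 / 2) * Cl2 (2 * x + 2 * φ) - (1 / 2) * Cl2 (2 * x - 2 * φ)
        - (1 / 2) * Cl2 (4 * φ) := by
  have hπ := Real.pi_pos
  have hφ0 : 0 < φ := h1.trans h2
  set f : ℝ → ℝ := fun θ => Real.log ((Real.tan φ + Real.tan θ) / (Real.tan φ - Real.tan θ))
    with hf
  set G : ℝ → ℝ := fun t => - Real.log (2 * Real.sin (t / 2)) with hG
  -- integrability of f on [x, φ]
  set m1 : ℝ := min (Real.sin (φ + x)) (Real.sin (2 * φ)) with hm1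
  have hm1pos : 0 < m1 := by
    refine lt_min (Real.sin_pos_of_pos_of_lt_pi (by linarith) (by linarith)) ?_
    exact Real.sin_pos_of_pos_of_lt_pi (by linarith) (by linarith)
  have hm1le1 : m1 ≤ 1 := (min_le_left _ _).trans (Real.sin_le_one _)
  have hsin_ge : ∀ θ ∈ Set.Ioo x φ, m1 ≤ Real.sin (φ + θ) := by
    intro θ hθ
    exact sin_endpoint_min (by linarith [hθ.1]) (by linarith) (by linarith [hθ.1])
      (by linarith [hθ.2])
  have hmeas : Measurable f := by
    have htan : Measurable Real.tan := by
      have : Real.tan = fun θ => Real.sin θ / Real.cos θ := funext fun θ => Real.tan_eq_sin_div_cos θ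
      rw [this]
      exact Real.measurable_sin.div Real.measurable_cos
    exact Real.measurable_log.comp ((measurable_const.add htan).div (measurable_const.sub htan))
  set bound : ℝ → ℝ := fun θ => |Real.log m1| + (Real.log (π / 2) - Real.log (φ - θ)) with hbound
  have hbound_int : IntervalIntegrable bound volume x φ :=
    (_root_.intervalIntegrable_const).add
      ((_root_.intervalIntegrable_const).sub (intervalIntegrable_log_sub h2))
  have hbound_f : ∀ θ ∈ Set.Ioo x φ, ‖f θ‖ ≤ bound θ := by
    intro θ hθ
    have hθ0 : 0 < θ := h1.trans hθ.1
    have hθφ : θ < φ := hθ.2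
    have hfθ : f θ = Real.log (Real.sin (φ + θ)) - Real.log (Real.sin (φ - θ)) :=
      integrand_eq hφ0 h3 hθ0 hθφ
    rw [hfθ]
    have hsp : 0 < Real.sin (φ + θ) := Real.sin_pos_of_pos_of_lt_pi (by linarith) (by linarith)
    have hsm : 0 < Real.sin (φ - θ) := Real.sin_pos_of_pos_of_lt_pi (by linarith) (by linarith)
    have hA : |Real.log (Real.sin (φ + θ))| ≤ |Real.log m1| := by
      have e1 : Real.log m1 ≤ Real.log (Real.sin (φ + θ)) :=
        Real.log_le_log hm1pos (hsin_ge θ hθ)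
      have e2 : Real.log (Real.sin (φ + θ)) ≤ 0 :=
        Real.log_nonpos hsp.le (Real.sin_le_one _)
      have e3 : Real.log m1 ≤ 0 := Real.log_nonpos hm1pos.le hm1le1
      rw [abs_of_nonpos e2, abs_of_nonpos e3]
      linarith
    have hB : |Real.log (Real.sin (φ - θ))| ≤ Real.log (π / 2) - Real.log (φ - θ) := by
      have hu : 0 < φ - θ := by linarith
      have hjordan : 2 / π * (φ - θ) ≤ Real.sin (φ - θ) :=
        Real.mul_le_sin hu.le (by linarith)
      have hppos : (0:ℝ) < 2 / π := by positivity
      have e1 : Real.log (2 / π * (φ - θ)) ≤ Real.log (Real.sin (φ - θ)) :=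
        Real.log_le_log (by positivity) hjordan
      have e2 : Real.log (2 / π * (φ - θ)) = Real.log (2 / π) + Real.log (φ - θ) :=
        Real.log_mul hppos.ne' hu.ne'
      have e3 : Real.log (2 / π) = - Real.log (π / 2) := by
        rw [show (2 : ℝ) / π = (π / 2)⁻¹ by field_simp, Real.log_inv]
      have e4 : Real.log (Real.sin (φ - θ)) ≤ 0 :=
        Real.log_nonpos hsm.le (Real.sin_le_one _)
      rw [abs_of_nonpos e4]
      rw [e2, e3] at e1
      linarith
    calc ‖Real.log (Real.sin (φ + θ)) - Real.log (Real.sin (φ - θ))‖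
        ≤ |Real.log (Real.sin (φ + θ))| + |Real.log (Real.sin (φ - θ))| := abs_sub _ _
      _ ≤ bound θ := by rw [hbound]; simp only; linarith
  have hint : IntervalIntegrable f volume x φ := by
    rw [intervalIntegrable_iff_integrableOn_Ioc_of_le h2.le]
    rw [intervalIntegrable_iff_integrableOn_Ioc_of_le h2.le] at hbound_int
    refine Integrable.mono' hbound_int hmeas.aestronglyMeasurable ?_
    have hne : ∀ᵐ θ : ℝ ∂(volume.restrict (Set.Ioc x φ)), θ ≠ φ := by
      refine ae_restrict_of_ae ?_
      refine ae_iff.mpr ?_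
      have hset : {a : ℝ | ¬ a ≠ φ} = {φ} := by ext a; simp
      rw [hset]
      exact measure_singleton φ
    filter_upwards [ae_restrict_mem measurableSet_Ioc, hne] with θ hθ hθne
    exact hbound_f θ ⟨hθ.1, lt_of_le_of_ne hθ.2 hθne⟩
  -- key identity on Ioo x φ
  set R : ℝ → ℝ := fun c => 2⁻¹ * (Cl2 (2*φ - 2*x) - Cl2 (2*φ - 2*c))
      - 2⁻¹ * (Cl2 (2*c + 2*φ) - Cl2 (2*x + 2*φ)) with hR
  have key : ∀ c ∈ Set.Ioo x φ, (∫ θ in x..c, f θ) = R c := by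
    intro c hc
    have hxc : x < c := hc.1
    have hcφ : c < φ := hc.2
    have hEqOn : Set.EqOn f
        (fun θ => (- Real.log (2 * Real.sin ((2*φ - 2*θ) / 2)))
          - (- Real.log (2 * Real.sin ((2*θ + 2*φ) / 2)))) (Set.uIcc x c) := by
      intro θ hθ
      rw [Set.uIcc_of_le hxc.le] at hθ
      have hθ0 : 0 < θ := lt_of_lt_of_le h1 hθ.1
      have hθφ : θ < φ := lt_of_le_of_lt hθ.2 hcφ
      have hsp : 0 < Real.sin (φ + θ) := Real.sin_pos_of_pos_of_lt_pi (by linarith) (by linarith)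
      have hsm : 0 < Real.sin (φ - θ) := Real.sin_pos_of_pos_of_lt_pi (by linarith) (by linarith)
      have hfθ : f θ = Real.log (Real.sin (φ + θ)) - Real.log (Real.sin (φ - θ)) :=
        integrand_eq hφ0 h3 hθ0 hθφ
      have e1 : (2*φ - 2*θ) / 2 = φ - θ := by ring
      have e2 : (2*θ + 2*φ) / 2 = φ + θ := by ring
      show f θ = _
      simp only [e1, e2]
      rw [hfθ, Real.log_mul two_ne_zero hsm.ne', Real.log_mul two_ne_zero hsp.ne']
      ring
    rw [intervalIntegral.integral_congr hEqOn]
    have hc1 : ContinuousOn (fun θ : ℝ => - Real.log (2 * Real.sin ((2*φ - 2*θ) / 2)))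
        (Set.uIcc x c) := by
      refine ContinuousOn.neg (ContinuousOn.log (by fun_prop) ?_)
      intro θ hθ
      rw [Set.uIcc_of_le hxc.le] at hθ
      have : 0 < Real.sin ((2*φ - 2*θ) / 2) := by
        rw [show (2*φ - 2*θ) / 2 = φ - θ by ring]
        exact Real.sin_pos_of_pos_of_lt_pi (by linarith [hθ.2]) (by linarith [hθ.1, h1])
      positivity
    have hc2 : ContinuousOn (fun θ : ℝ => - Real.log (2 * Real.sin ((2*θ + 2*φ) / 2)))
        (Set.uIcc x c) := by
      refine ContinuousOn.neg (ContinuousOn.log (by fun_prop) ?_)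
      intro θ hθ
      rw [Set.uIcc_of_le hxc.le] at hθ
      have : 0 < Real.sin ((2*θ + 2*φ) / 2) := by
        rw [show (2*θ + 2*φ) / 2 = φ + θ by ring]
        refine Real.sin_pos_of_pos_of_lt_pi (by linarith [hθ.1, h1]) ?_
        have := hθ.2
        linarith [hcφ]
      positivity
    rw [intervalIntegral.integral_sub hc1.intervalIntegrable hc2.intervalIntegrable]
    have hA : (∫ θ in x..c, - Real.log (2 * Real.sin ((2*φ - 2*θ) / 2)))
        = 2⁻¹ * (Cl2 (2*φ - 2*x) - Cl2 (2*φ - 2*c)) := by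
      rw [intervalIntegral.integral_comp_sub_mul
        (fun t : ℝ => - Real.log (2 * Real.sin (t / 2))) two_ne_zero (2*φ)]
      rw [clausen_integral (by linarith) (by linarith) (by linarith)]
      rw [smul_eq_mul]
    have hB : (∫ θ in x..c, - Real.log (2 * Real.sin ((2*θ + 2*φ) / 2)))
        = 2⁻¹ * (Cl2 (2*c + 2*φ) - Cl2 (2*x + 2*φ)) := by
      rw [intervalIntegral.integral_comp_mul_add
        (fun t : ℝ => - Real.log (2 * Real.sin (t / 2))) two_ne_zero (2*φ)]
      rw [clausen_integral (by linarith) (by linarith) (by linarith)]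
      rw [smul_eq_mul]
    rw [hA, hB, hR]
  -- limits
  haveI hNB : (𝓝[Set.Ioo x φ] φ).NeBot := by
    refine mem_closure_iff_nhdsWithin_neBot.mp ?_
    rw [closure_Ioo (ne_of_lt h2)]
    exact ⟨h2.le, le_refl φ⟩
  have hTend1 : Tendsto (fun c => ∫ θ in x..c, f θ) (𝓝[Set.Ioo x φ] φ)
      (𝓝 (∫ θ in x..φ, f θ)) := by
    have hcw : ContinuousWithinAt (fun c => ∫ θ in x..c, f θ) (Set.Icc x φ) φ := by
      refine intervalIntegral.continuousWithinAt_primitive (measure_singleton φ) ?_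
      rw [min_self, max_eq_right h2.le]
      exact hint
    exact hcw.mono Set.Ioo_subset_Icc_self
  have hcontR : Continuous R := by
    rw [hR]
    refine Continuous.sub ?_ ?_
    · exact continuous_const.mul (continuous_const.sub
        (Cl2_continuous.comp (continuous_const.sub (continuous_const.mul continuous_id))))
    · exact continuous_const.mul ((Cl2_continuous.comp
        ((continuous_const.mul continuous_id).add continuous_const)).sub continuous_const)
  have hTend2 : Tendsto R (𝓝[Set.Ioo x φ] φ) (𝓝 (R φ)) :=
    (hcontR.tendsto φ).mono_left nhdsWithin_le_nhds
  have hEq : (fun c => ∫ θ in x..c, f θ) =ᶠ[𝓝[Set.Ioo x φ] φ] R :=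
    eventually_of_mem self_mem_nhdsWithin key
  have hfinal : (∫ θ in x..φ, f θ) = R φ :=
    tendsto_nhds_unique (hTend1.congr' hEq) hTend2
  rw [hfinal, hR]
  simp only
  rw [show (2*φ - 2*φ : ℝ) = 0 by ring, Cl2_zero]
  rw [show (2*φ - 2*x : ℝ) = -(2*x - 2*φ) by ring, Cl2_neg]
  rw [show (2*φ + 2*φ : ℝ) = 4*φ by ring]
  ring
end

section
/- With φ₇ = arctan(√7), Cl₂(π + 2φ₇) = (1/2)Cl₂(4φ₇) - Cl₂(2φ₇). -/
open Real

/-- the full sum over ℕ (term at 0 vanishes) -/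
noncomputable def S (θ : ℝ) : ℝ := ∑' n : ℕ, Real.sin (n * θ) / (n : ℝ) ^ 2

lemma summable_g (θ : ℝ) : Summable (fun n : ℕ => Real.sin (n * θ) / (n : ℝ) ^ 2) := by
  apply Summable.of_norm_bounded (g := fun n : ℕ => (1 : ℝ) / (n : ℝ) ^ 2)
  · exact summable_one_div_nat_pow.mpr one_lt_two
  · intro n
    rcases eq_or_ne (n : ℝ) 0 with h | h
    · simp [h]
    · rw [norm_div, norm_pow, Real.norm_natCast, Real.norm_eq_abs]
      gcongr
      exact abs_sin_le_one _

lemma Cl2_eq_S (θ : ℝ) : Cl2 θ = S θ := by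
  rw [S, Summable.tsum_eq_zero_add (summable_g θ)]
  simp only [Nat.cast_zero, zero_mul, Real.sin_zero, zero_div, zero_add]
  unfold Cl2
  refine tsum_congr fun n => ?_
  push_cast
  ring_nf

lemma cos_nat_pi (n : ℕ) : Real.cos (n * π) = (-1) ^ n := by
  induction n with
  | zero => simp
  | succ k ih =>
    push_cast
    rw [add_mul, one_mul, Real.cos_add_pi, ih]
    ring

lemma sin_nat_pi_add (n : ℕ) (x : ℝ) :
    Real.sin (n * π + x) = (-1) ^ n * Real.sin x := by
  rw [Real.sin_add, Real.sin_nat_mul_pi, cos_nat_pi]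
  ring

set_option maxHeartbeats 1000000 in
theorem key (θ : ℝ) : S (π + θ) = (1 / 2) * S (2 * θ) - S θ := by
  set g : ℕ → ℝ := fun n => Real.sin (n * θ) / (n : ℝ) ^ 2 with hg
  have hsum : Summable g := summable_g θ
  have he : Summable (fun k : ℕ => g (2 * k)) :=
    hsum.comp_injective fun a b h => by omega
  have ho : Summable (fun k : ℕ => g (2 * k + 1)) :=
    hsum.comp_injective fun a b h => by omega
  -- even part equals (1/4) S(2θ)
  have heven : (∑' k : ℕ, g (2 * k)) = (1 / 4) * S (2 * θ) := by
    rw [S, ← tsum_mul_left]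
    refine tsum_congr fun k => ?_
    have h1 : ((2 * k : ℕ) : ℝ) * θ = (k : ℝ) * (2 * θ) := by push_cast; ring
    have h2 : ((2 * k : ℕ) : ℝ) ^ 2 = 4 * (k : ℝ) ^ 2 := by push_cast; ring
    rw [hg]
    simp only [h1, h2]
    ring
  -- S(π+θ) termwise
  have hterm : S (π + θ) = ∑' n : ℕ, (-1 : ℝ) ^ n * g n := by
    rw [S]
    refine tsum_congr fun n => ?_
    have : (n : ℝ) * (π + θ) = n * π + n * θ := by ring
    rw [this, sin_nat_pi_add, hg, mul_div_assoc]
  have hsplit1 : (∑' k : ℕ, g (2 * k)) + (∑' k : ℕ, g (2 * k + 1)) = S θ :=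
    tsum_even_add_odd he ho
  have he' : Summable (fun k : ℕ => (-1 : ℝ) ^ (2 * k) * g (2 * k)) := by
    simpa [pow_mul] using he
  have ho' : Summable (fun k : ℕ => (-1 : ℝ) ^ (2 * k + 1) * g (2 * k + 1)) := by
    simpa [pow_succ, pow_mul] using ho.neg
  have hsplit2 : (∑' k : ℕ, (-1 : ℝ) ^ (2 * k) * g (2 * k)) +
      (∑' k : ℕ, (-1 : ℝ) ^ (2 * k + 1) * g (2 * k + 1)) =
      ∑' n : ℕ, (-1 : ℝ) ^ n * g n :=
    tsum_even_add_odd (f := fun n : ℕ => (-1 : ℝ) ^ n * g n) he' ho'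
  have e1 : (∑' k : ℕ, (-1 : ℝ) ^ (2 * k) * g (2 * k)) = ∑' k : ℕ, g (2 * k) := by
    refine tsum_congr fun k => ?_
    simp [pow_mul]
  have e2 : (∑' k : ℕ, (-1 : ℝ) ^ (2 * k + 1) * g (2 * k + 1)) =
      -∑' k : ℕ, g (2 * k + 1) := by
    rw [← tsum_neg]
    refine tsum_congr fun k => ?_
    simp [pow_succ, pow_mul]
  rw [hterm, ← hsplit2, e1, e2]
  have : (∑' k : ℕ, g (2 * k + 1)) = S θ - ∑' k : ℕ, g (2 * k) := by
    linarith [hsplit1]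
  rw [this, heven]
  ring

theorem stmt15 :
    Cl2 (π + 2 * Real.arctan (Real.sqrt 7)) =
      (1 / 2) * Cl2 (4 * Real.arctan (Real.sqrt 7))
        - Cl2 (2 * Real.arctan (Real.sqrt 7)) := by
  have h := key (2 * Real.arctan (Real.sqrt 7))
  rw [Cl2_eq_S, Cl2_eq_S, Cl2_eq_S]
  have h4 : 4 * Real.arctan (Real.sqrt 7) = 2 * (2 * Real.arctan (Real.sqrt 7)) := by ring
  rw [h4]
  exact h
end
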